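/- Let J : ℝⁿ → ℝ be a convex differentiable function, A an m×n real matrix, b ∈ ℝᵐ. Suppose x₊, λ₊ satisfy ∇J(x₊) + Aᵀλ₊ - ρ AᵀA(x₊ - x) + α(x₊ - x) = 0 for some x ∈ ℝⁿ, λ ∈ ℝᵐ, ρ, α > 0 with λ₊ = λ + ρ(Ax₊ - b), and x*, λ* satisfy Ax* = b and ∇J(x*) + Aᵀλ* = 0. Then (1/ρ)(λ - λ₊)ᵀ(λ₊ - λ*) + α(x - x₊)ᵀ(x₊ - x*) ≥ (x₊ - x)ᵀAᵀ(λ - λ₊). -/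

import Mathlib

open Matrix

lemma grad_first_order {n : ℕ} {J : EuclideanSpace ℝ (Fin n) → ℝ}
    {J' : EuclideanSpace ℝ (Fin n) → EuclideanSpace ℝ (Fin n)}
    (hconv : ConvexOn ℝ Set.univ J) (hgrad : ∀ x, HasGradientAt J (J' x) x)
    (a b : EuclideanSpace ℝ (Fin n)) :
    (inner ℝ (J' a) (b - a) : ℝ) ≤ J b - J a := by
  set g : ℝ → ℝ := J ∘ (AffineMap.lineMap a b) with hgdef
  have hgc : ConvexOn ℝ Set.univ g := by
    have := hconv.comp_affineMap (AffineMap.lineMap a b : ℝ →ᵃ[ℝ] EuclideanSpace ℝ (Fin n))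
    simpa [Set.preimage_univ] using this
  have hline : HasDerivAt (fun t : ℝ => AffineMap.lineMap a b t) (b - a) 0 := by
    have h : HasDerivAt (fun t : ℝ => t • (b - a) + a) ((1 : ℝ) • (b - a)) 0 :=
      ((hasDerivAt_id (0:ℝ)).smul_const (b - a)).add_const a
    have heq : (fun t : ℝ => AffineMap.lineMap a b t) = fun t : ℝ => t • (b - a) + a := by
      funext t; simp [AffineMap.lineMap_apply_module]; module
    rw [heq]; simpa using h
  have hd : HasDerivAt g ((inner ℝ (J' a) (b - a) : ℝ)) 0 := by
    have h2 := (hgrad a).hasFDerivAt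
    rw [show a = AffineMap.lineMap a b (0:ℝ) by simp] at h2
    have h3 := h2.comp_hasDerivAt (0:ℝ) hline
    simpa [hgdef, InnerProductSpace.toDual_apply_apply] using h3
  have := hgc.le_slope_of_hasDerivAt (Set.mem_univ (0:ℝ)) (Set.mem_univ (1:ℝ)) one_pos hd
  simpa [slope_def_field, hgdef] using this

/-- Lemma 2 of the paper. For convex differentiable `J`, if
`∇J(x₊) + Aᵀλ₊ - ρ AᵀA(x₊ - x) + α(x₊ - x) = 0` with `λ₊ = λ + ρ(Ax₊ - b)`,
and `(x*, λ*)` is a KKT point (`Ax* = b`, `∇J(x*) + Aᵀλ* = 0`), then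
`(1/ρ)(λ - λ₊)ᵀ(λ₊ - λ*) + α(x - x₊)ᵀ(x₊ - x*) ≥ (x₊ - x)ᵀAᵀ(λ - λ₊)`. -/
theorem validity_layer_inner_product_inequality {m n : ℕ}
    (J : EuclideanSpace ℝ (Fin n) → ℝ) (J' : EuclideanSpace ℝ (Fin n) → EuclideanSpace ℝ (Fin n))
    (hconv : ConvexOn ℝ Set.univ J) (hgrad : ∀ x, HasGradientAt J (J' x) x)
    (A : Matrix (Fin m) (Fin n) ℝ) (b : EuclideanSpace ℝ (Fin m))
    (ρ α : ℝ) (hρ : 0 < ρ) (hα : 0 < α)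
    (x xp xs : EuclideanSpace ℝ (Fin n)) (l lp ls : EuclideanSpace ℝ (Fin m))
    (hopt : J' xp + Matrix.toEuclideanLin Aᵀ lp
        - ρ • Matrix.toEuclideanLin (Aᵀ * A) (xp - x) + α • (xp - x) = 0)
    (hdual : lp = l + ρ • (Matrix.toEuclideanLin A xp - b))
    (hfeas : Matrix.toEuclideanLin A xs = b)
    (hstat : J' xs + Matrix.toEuclideanLin Aᵀ ls = 0) :
    (1 / ρ) * (inner ℝ (l - lp) (lp - ls) : ℝ) + α * (inner ℝ (x - xp) (xp - xs) : ℝ)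
      ≥ (inner ℝ (xp - x) (Matrix.toEuclideanLin Aᵀ (l - lp)) : ℝ) := by

  have hadj : ∀ (v : EuclideanSpace ℝ (Fin m)) (w : EuclideanSpace ℝ (Fin n)),
      (inner ℝ (Matrix.toEuclideanLin Aᵀ v) w : ℝ) = inner ℝ v (Matrix.toEuclideanLin A w) := by
    intro v w
    rw [← Matrix.conjTranspose_eq_transpose_of_trivial,
      Matrix.toEuclideanLin_conjTranspose_eq_adjoint, LinearMap.adjoint_inner_left]
  have hmul : Matrix.toEuclideanLin (Aᵀ * A) (xp - x)
      = Matrix.toEuclideanLin Aᵀ (Matrix.toEuclideanLin A (xp - x)) := by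
    simp [Matrix.toEuclideanLin_apply, Matrix.mulVec_mulVec]
  have hmono : (0:ℝ) ≤ inner ℝ (J' xp - J' xs) (xp - xs) := by
    have h1 := grad_first_order hconv hgrad xp xs
    have h2 := grad_first_order hconv hgrad xs xp
    have e1 : (inner ℝ (J' xp) (xs - xp) : ℝ) = -(inner ℝ (J' xp) (xp - xs)) := by
      rw [show xs - xp = -(xp - xs) from (neg_sub _ _).symm, inner_neg_right]
    rw [inner_sub_left]
    rw [e1] at h1
    linarith
  have hx1 : J' xp = ρ • Matrix.toEuclideanLin (Aᵀ * A) (xp - x) - α • (xp - x)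
      - Matrix.toEuclideanLin Aᵀ lp := sub_eq_zero.mp (by rw [← hopt]; abel)
  have hx2 : J' xs = -(Matrix.toEuclideanLin Aᵀ ls) := eq_neg_of_add_eq_zero_left hstat
  have hdiff : J' xp - J' xs = ρ • Matrix.toEuclideanLin Aᵀ (Matrix.toEuclideanLin A (xp - x))
      - α • (xp - x) - Matrix.toEuclideanLin Aᵀ (lp - ls) := by
    rw [hx1, hx2, hmul]; simp only [map_sub]; abel
  have hAw : Matrix.toEuclideanLin A (xp - xs) = ρ⁻¹ • (lp - l) := by
    have h : lp - l = ρ • (Matrix.toEuclideanLin A xp - b) := by rw [hdual]; abel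
    rw [map_sub, hfeas, h, smul_smul, inv_mul_cancel₀ hρ.ne', one_smul]
  rw [hdiff] at hmono
  simp only [inner_sub_left, real_inner_smul_left, hadj, hAw, real_inner_smul_right] at hmono
  have e2 : (inner ℝ (xp - x) (Matrix.toEuclideanLin Aᵀ (l - lp)) : ℝ)
      = -(inner ℝ (Matrix.toEuclideanLin A (xp - x)) (lp - l)) := by
    rw [real_inner_comm, hadj, show l - lp = -(lp - l) from (neg_sub _ _).symm,
      inner_neg_left, real_inner_comm]
  rw [ge_iff_le]
  have e3 : (inner ℝ (l - lp) (lp - ls) : ℝ) = -(inner ℝ (lp - ls) (lp - l)) := by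
    rw [show l - lp = -(lp - l) from (neg_sub _ _).symm, inner_neg_left, real_inner_comm]
  have e4 : (inner ℝ (x - xp) (xp - xs) : ℝ) = -(inner ℝ (xp - x) (xp - xs)) := by
    rw [show x - xp = -(xp - x) from (neg_sub _ _).symm, inner_neg_left]
  rw [e2, e3, e4]
  simp only [inner_sub_left] at hmono ⊢
  rw [← mul_assoc, mul_inv_cancel₀ hρ.ne', one_mul] at hmono
  rw [one_div]
  linarith
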